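/- If the matrix [[C+σ²I, k],[kᵀ, c]] arises from a positive semidefinite kernel with σ² > 0 added only on training points, and if x* coincides with a training point x̄ᵢ (so k equals the i-th column of C and c = Cᵢᵢ), then the posterior variance c − kᵀ(C+σ²I)^{-1}k ≤ σ². -/

import Mathlib

open scoped Matrix

lemma aux_dot {n : ℕ} (M N : Matrix (Fin n) (Fin n) ℝ) (i : Fin n) :
    (M.mulVec (Pi.single i 1)) ⬝ᵥ N.mulVec (M.mulVec (Pi.single i 1)) = (Mᵀ * N * M) i i := by
  have h : M.mulVec (Pi.single i 1) = Mᵀ.vecMul (Pi.single i 1) := by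
    rw [Matrix.vecMul_transpose]
  rw [Matrix.mulVec_mulVec, Matrix.dotProduct_mulVec, ← Matrix.vecMul_vecMul, h,
    Matrix.vecMul_vecMul, Matrix.vecMul_vecMul]
  simp [Matrix.vecMul, dotProduct, Pi.single_apply, Matrix.mul_assoc]

/-- If the test point coincides with the `i`-th training point, so that `k = Ceᵢ` and
`c = Cᵢᵢ`, then the GP posterior variance is bounded by the noise variance:
`Cᵢᵢ − (Ceᵢ)ᵀ(C+σ²I)⁻¹(Ceᵢ) ≤ σ²`, for `C` symmetric positive semidefinite and `σ² > 0`. -/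
theorem stmt_19 {n : ℕ} (C : Matrix (Fin n) (Fin n) ℝ) (hC : C.IsSymm)
    (hpsd : C.PosSemidef) (σ2 : ℝ) (hσ2 : 0 < σ2) (i : Fin n) :
    C i i - (C.mulVec (Pi.single i 1)) ⬝ᵥ
        (C + σ2 • (1 : Matrix (Fin n) (Fin n) ℝ))⁻¹.mulVec (C.mulVec (Pi.single i 1))
      ≤ σ2 := by
  set A := C + σ2 • (1 : Matrix (Fin n) (Fin n) ℝ) with hA_def
  have hA : A.PosDef := by
    have h1 : (σ2 • (1 : Matrix (Fin n) (Fin n) ℝ)).PosDef := by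
      rw [Matrix.smul_one_eq_diagonal]
      exact Matrix.posDef_diagonal_iff.mpr fun _ => hσ2
    exact h1.posSemidef_add hpsd
  have hdet : IsUnit A.det := hA.det_pos.ne'.isUnit
  have hAA : A * A⁻¹ = 1 := Matrix.mul_nonsing_inv A hdet
  have hAA' : A⁻¹ * A = 1 := Matrix.nonsing_inv_mul A hdet
  have hCA : C = A - σ2 • 1 := by rw [hA_def]; abel
  have hinvC : A⁻¹ * C = 1 - σ2 • A⁻¹ := by
    rw [hCA, Matrix.mul_sub, hAA', Matrix.mul_smul, Matrix.mul_one]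
  have hCinv : C * A⁻¹ = 1 - σ2 • A⁻¹ := by
    rw [hCA, Matrix.sub_mul, hAA, Matrix.smul_mul, Matrix.one_mul]
  have key : C * A⁻¹ * C = C - σ2 • 1 + (σ2 * σ2) • A⁻¹ := by
    rw [hCinv, Matrix.sub_mul, Matrix.one_mul, Matrix.smul_mul, hinvC, smul_sub, smul_smul]
    abel
  rw [aux_dot, hC.eq, key]
  have hinv_nonneg : 0 ≤ A⁻¹ i i := by
    have := hA.posSemidef.inv.dotProduct_mulVec_nonneg (Pi.single i 1)
    simpa [Matrix.mulVec_single, dotProduct, Pi.single_apply] using this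
  simp only [Matrix.add_apply, Matrix.sub_apply, Matrix.smul_apply, Matrix.one_apply_eq,
    smul_eq_mul, mul_one]
  nlinarith
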